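/- Let β≥0 and f∈𝓜_s(β). Then f(N)T_{f²} is relatively bounded with respect to f(N)^β: there exists a constant a>0 such that ‖f(N)T_{f²}φ‖ ≤ a‖f(N)^βφ‖ for all φ∈ℓ²_fin(ℕ), where f² denotes n↦f(n)² and f(N)^β is the multiplication operator ξ_n ↦ f(n)^βξ_n. -/

import Mathlib

open Filter Topology
open scoped ENNReal

noncomputable section

abbrev l2 : Type := lp (fun _ : ℕ => ℂ) 2

def xi (n : ℕ) : l2 := lp.single 2 n 1

def FinSupp (φ : l2) : Prop := (Function.support (⇑φ : ℕ → ℂ)).Finite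

/-- The class 𝒦. -/
def MemK (f : ℕ → ℝ) : Prop := 0 < f 0 ∧ ∀ n, f n < f (n + 1)

/-- The class 𝒦⁻. -/
def MemKminus (f : ℕ → ℝ) : Prop := MemK f ∧ Summable (fun n => 1 / (f n) ^ 2)

def fsq (f : ℕ → ℝ) : ℕ → ℝ := fun n => (f n) ^ 2

/-- the sequence of the multiplication operator `f(N)` applied to φ -/
def mulSeq (f : ℕ → ℝ) (φ : ℕ → ℂ) : ℕ → ℂ := fun n => ((f n : ℝ) : ℂ) * φ n

/-- the sequence of `f(N)^p` applied to φ -/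
def powSeq (f : ℕ → ℝ) (p : ℕ) (φ : ℕ → ℂ) : ℕ → ℂ := fun n => (((f n) ^ p : ℝ) : ℂ) * φ n

/-- coordinates of `T_{f,m} φ`. -/
def TfmSeq (f : ℕ → ℝ) (m : ℕ) (φ : ℕ → ℂ) : ℕ → ℂ := fun n =>
  Complex.I * ∑ k ∈ Finset.Icc 1 m,
    ((if k ≤ n then φ (n - k) / ((f n - f (n - k) : ℝ) : ℂ) else 0)
      - φ (n + k) / ((f (n + k) - f n : ℝ) : ℂ))

/-- `(φ, ψ)` is in the graph of `T_f`. -/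
def InGraphTf (f : ℕ → ℝ) (φ ψ : l2) : Prop :=
  ∃ h : ∀ m, Memℓp (TfmSeq f m (⇑φ)) 2,
    Tendsto (fun m => (⟨TfmSeq f m (⇑φ), h m⟩ : l2)) atTop (𝓝 ψ)


/-- The conditions that `g, h` witness membership of `f` in `𝓜(β)`:
`g : ℕ → (0,∞)`, `h ∈ ℓ¹(ℕ_{≥1})`, `∑_n f(n)²/g(n) < ∞`, and
`g(n) / (f(n)^β Δ_k(f², n))² ≤ h(k)²` for all `n` and all `k ≥ 1`. -/
def MWitness (β : ℝ) (f g h : ℕ → ℝ) : Prop :=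
  (∀ n, 0 < g n) ∧
  Summable (fun k : ℕ => |h (k + 1)|) ∧
  Summable (fun n => (f n) ^ 2 / g n) ∧
  ∀ n k : ℕ, 1 ≤ k →
    g n / (Real.rpow (f n) β * ((f (n + k)) ^ 2 - (f n) ^ 2)) ^ 2 ≤ (h k) ^ 2

/-- The class `𝓜(β)`. -/
def MemM (β : ℝ) (f : ℕ → ℝ) : Prop := MemKminus f ∧ ∃ g h : ℕ → ℝ, MWitness β f g h

/-- The class `𝓜_s(β)`: as `𝓜(β)`, with a uniform bound `C` on the sums
`∑_{k=1}^n g(n) / (f(n-k)^β (f(n)² - f(n-k)²))²` for the same witness `g`. -/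
def MemMs (β : ℝ) (f : ℕ → ℝ) : Prop :=
  MemKminus f ∧ ∃ g h : ℕ → ℝ, MWitness β f g h ∧
    ∃ C : ℝ, 0 < C ∧ ∀ n : ℕ,
      (∑ k ∈ Finset.Icc 1 n,
        g n / (Real.rpow (f (n - k)) β * ((f n) ^ 2 - (f (n - k)) ^ 2)) ^ 2) < C

/-- the sequence of `f(N)^β` (real power) applied to `φ` -/
def rpowSeq (f : ℕ → ℝ) (β : ℝ) (φ : ℕ → ℂ) : ℕ → ℂ :=
  fun n => ((Real.rpow (f n) β : ℝ) : ℂ) * φ n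


-- ==================== auxiliary development ====================

lemma rpow_toReal_two (x : ℝ) : x ^ ((2:ℝ≥0∞)).toReal = x ^ (2:ℕ) := by
  rw [show ((2:ℝ≥0∞)).toReal = ((2:ℕ):ℝ) by norm_num, Real.rpow_natCast]

/-- the pointwise limit of `TfmSeq (fsq f) m φ` for `φ` supported in `[0,S)`. -/
def Eseq (f : ℕ → ℝ) (S : ℕ) (φ : ℕ → ℂ) : ℕ → ℂ := fun n =>
  Complex.I * ((∑ k ∈ Finset.Icc 1 n, φ (n - k) / ((f n ^ 2 - f (n - k) ^ 2 : ℝ) : ℂ))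
    - ∑ k ∈ Finset.Icc 1 S, φ (n + k) / ((f (n + k) ^ 2 - f n ^ 2 : ℝ) : ℂ))

lemma TfmSeq_eq_Eseq (f : ℕ → ℝ) (S : ℕ) (φ : ℕ → ℂ) (hφ : ∀ j, S ≤ j → φ j = 0)
    (n m : ℕ) (hn : n ≤ m) (hS : S ≤ m) :
    TfmSeq (fsq f) m φ n = Eseq f S φ n := by
  unfold TfmSeq Eseq fsq
  rw [Finset.sum_sub_distrib]
  congr 1
  congr 1
  · refine (Finset.sum_subset (Finset.Icc_subset_Icc_right hn) ?_).symm.trans ?_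
    · intro k hk hk'
      rw [if_neg]
      intro hkn
      exact hk' (Finset.mem_Icc.2 ⟨(Finset.mem_Icc.1 hk).1, hkn⟩)
    · refine Finset.sum_congr rfl fun k hk => ?_
      rw [if_pos (Finset.mem_Icc.1 hk).2]
  · refine (Finset.sum_subset (Finset.Icc_subset_Icc_right hS) ?_).symm
    intro k hk hk'
    have hk1 : 1 ≤ k := (Finset.mem_Icc.1 hk).1
    have : S < k := by
      by_contra hc
      exact hk' (Finset.mem_Icc.2 ⟨hk1, not_lt.1 hc⟩)
    rw [hφ (n + k) (by omega), zero_div]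

lemma Tphi_apply (f : ℕ → ℝ) (S : ℕ) (φ Tφ : l2) (hφ : ∀ j, S ≤ j → (⇑φ : ℕ → ℂ) j = 0)
    (hT : InGraphTf (fsq f) φ Tφ) (n : ℕ) : (⇑Tφ : ℕ → ℂ) n = Eseq f S (⇑φ) n := by
  obtain ⟨hmem, htend⟩ := hT
  have h1 : Tendsto (fun m => TfmSeq (fsq f) m (⇑φ) n) atTop (𝓝 ((⇑Tφ : ℕ → ℂ) n)) := by
    rw [tendsto_iff_norm_sub_tendsto_zero] at htend ⊢
    refine squeeze_zero (fun m => norm_nonneg _) (fun m => ?_) htend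
    have := lp.norm_apply_le_norm (p := 2) two_ne_zero
      ((⟨TfmSeq (fsq f) m ⇑φ, hmem m⟩ : l2) - Tφ) n
    exact this
  have h2 : Tendsto (fun m => TfmSeq (fsq f) m (⇑φ) n) atTop (𝓝 (Eseq f S (⇑φ) n)) := by
    refine Tendsto.congr' ?_ (tendsto_const_nhds (x := Eseq f S (⇑φ) n))
    filter_upwards [eventually_ge_atTop n, eventually_ge_atTop S] with m hm1 hm2
    exact (TfmSeq_eq_Eseq f S (⇑φ) hφ n m hm1 hm2).symm
  exact tendsto_nhds_unique h1 h2

lemma sum_shift_le (q : ℕ → ℝ) (hq : ∀ m, 0 ≤ q m) (hsum : Summable q) (k N : ℕ) :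
    ∑ n ∈ Finset.range N, q (n + k) ≤ ∑' m, q m := by
  have h1 : ∑ n ∈ Finset.range N, q (n + k) = ∑ m ∈ Finset.Ico k (N + k), q m := by
    refine Finset.sum_nbij' (fun n => n + k) (fun m => m - k) ?_ ?_ ?_ ?_ ?_
    · intro a ha; simp only [Finset.mem_range] at ha; simp only [Finset.mem_Ico]; omega
    · intro a ha; simp only [Finset.mem_Ico] at ha; simp only [Finset.mem_range]; omega
    · intro a _; omega
    · intro a ha; simp only [Finset.mem_Ico] at ha; omega
    · intro a _; rfl
  rw [h1]
  exact Summable.sum_le_tsum _ (fun m _ => hq m) hsum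


set_option maxHeartbeats 1600000 in
/-- Let `β ≥ 0` and `f ∈ 𝓜_s(β)`. Then `f(N) T_{f²}` is relatively bounded
w.r.t. `f(N)^β`: there is `a > 0` with `‖f(N) T_{f²} φ‖ ≤ a ‖f(N)^β φ‖` for all finitely
supported `φ`. -/
theorem stmt10 (β : ℝ) (hβ : 0 ≤ β) (f : ℕ → ℝ) (hf : MemMs β f) :
    ∃ a : ℝ, 0 < a ∧ ∀ φ : l2, FinSupp φ → ∀ Tφ : l2, InGraphTf (fsq f) φ Tφ →
      ∃ (hm : Memℓp (mulSeq f ⇑Tφ) 2) (hb : Memℓp (rpowSeq f β ⇑φ) 2),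
        ‖(⟨mulSeq f ⇑Tφ, hm⟩ : l2)‖ ≤ a * ‖(⟨rpowSeq f β ⇑φ, hb⟩ : l2)‖ := by
  classical
  obtain ⟨⟨⟨hf0, hstep⟩, _⟩, g, h, ⟨hgpos, hh, hfg, hwit⟩, C, hC, hMs⟩ := hf
  have fmono : StrictMono f := strictMono_nat_of_lt_succ hstep
  have fpos : ∀ n, 0 < f n := fun n => lt_of_lt_of_le hf0 (fmono.monotone (Nat.zero_le n))
  have fsqlt : ∀ {a b : ℕ}, a < b → f a ^ 2 < f b ^ 2 := fun {a b} hab =>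
    pow_lt_pow_left₀ (fmono hab) (fpos _).le two_ne_zero
  have rpos : ∀ m, 0 < Real.rpow (f m) β := fun m => Real.rpow_pos_of_pos (fpos m) β
  have rmono : ∀ {a b : ℕ}, a ≤ b → Real.rpow (f a) β ≤ Real.rpow (f b) β := fun {a b} hab =>
    Real.rpow_le_rpow (fpos _).le (fmono.monotone hab) hβ
  set G := ∑' n, f n ^ 2 / g n with hGdef
  have hGle : ∀ n, f n ^ 2 / g n ≤ G := fun n =>
    Summable.le_tsum hfg n (fun j _ => div_nonneg (sq_nonneg _) (hgpos j).le)
  have hGpos : 0 < G :=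
    lt_of_lt_of_le (div_pos (pow_pos (fpos 0) 2) (hgpos 0)) (hGle 0)
  set H := ∑' j : ℕ, |h (j + 1)| with hHdef
  have hH0 : 0 ≤ H := tsum_nonneg (fun _ => abs_nonneg _)
  have habs : ∀ k, 1 ≤ k → 0 < |h k| := by
    intro k hk
    have h1 := hwit 0 k hk
    have h2 : 0 < g 0 / (Real.rpow (f 0) β * ((f (0 + k)) ^ 2 - (f 0) ^ 2)) ^ 2 := by
      apply div_pos (hgpos 0)
      have : (0:ℝ) < Real.rpow (f 0) β * ((f (0 + k)) ^ 2 - (f 0) ^ 2) :=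
        mul_pos (rpos 0) (sub_pos.2 (fsqlt (by omega)))
      positivity
    have h3 : 0 < (h k) ^ 2 := lt_of_lt_of_le h2 h1
    rcases (sq_pos_iff).1 h3 with hne
    exact abs_pos.2 (by simpa using hne)
  have hsumIcc : ∀ S : ℕ, ∑ k ∈ Finset.Icc 1 S, |h k| ≤ H := by
    intro S
    have e : ∑ k ∈ Finset.Icc 1 S, |h k| = ∑ j ∈ Finset.range S, |h (j + 1)| := by
      refine Finset.sum_nbij' (fun k => k - 1) (fun j => j + 1) ?_ ?_ ?_ ?_ ?_
      · intro a ha; simp only [Finset.mem_Icc] at ha; simp only [Finset.mem_range]; omega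
      · intro a ha; simp only [Finset.mem_range] at ha; simp only [Finset.mem_Icc]; omega
      · intro a ha; simp only [Finset.mem_Icc] at ha; omega
      · intro a _; omega
      · intro a ha; simp only [Finset.mem_Icc] at ha; rw [show a - 1 + 1 = a by omega]
    rw [e]
    exact Summable.sum_le_tsum _ (fun _ _ => abs_nonneg _) hh
  set K := 2 * (C + H ^ 2) * G with hKdef
  have hK0 : 0 ≤ K := by positivity
  refine ⟨Real.sqrt (K + 1), Real.sqrt_pos.2 (by positivity), ?_⟩
  intro φ hφfin Tφ hgraph
  obtain ⟨S, hS⟩ : ∃ S, ∀ j, S ≤ j → (⇑φ : ℕ → ℂ) j = 0 := by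
    obtain ⟨S, hSsub⟩ := Finset.exists_nat_subset_range hφfin.toFinset
    refine ⟨S, fun j hj => ?_⟩
    by_contra hc
    have hmem : j ∈ hφfin.toFinset := hφfin.mem_toFinset.2 hc
    have := hSsub hmem
    simp only [Finset.mem_range] at this
    omega
  set q : ℕ → ℝ := fun m => Real.rpow (f m) β * ‖(⇑φ : ℕ → ℂ) m‖ with hqdef
  have hq0 : ∀ m, 0 ≤ q m := fun m => mul_nonneg (rpos m).le (norm_nonneg _)
  have hqnorm : ∀ m, ‖rpowSeq f β (⇑φ) m‖ = q m := by
    intro m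
    simp only [rpowSeq, hqdef, norm_mul, Complex.norm_real, Real.norm_eq_abs,
      abs_of_pos (rpos m)]
  have hqz : ∀ m, S ≤ m → q m = 0 := by
    intro m hm; simp [hqdef, hS m hm]
  have hsq : Summable (fun m => q m ^ 2) := by
    refine summable_of_ne_finset_zero (s := Finset.range S) (fun m hm => ?_)
    simp only [Finset.mem_range, not_lt] at hm
    rw [hqz m hm]; ring
  set P := ∑' m, q m ^ 2 with hPdef
  have hP0 : 0 ≤ P := tsum_nonneg (fun _ => sq_nonneg _)
  have hPle : ∀ F : Finset ℕ, ∑ m ∈ F, q m ^ 2 ≤ P := fun F =>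
    Summable.sum_le_tsum F (fun _ _ => sq_nonneg _) hsq
  have hb : Memℓp (rpowSeq f β ⇑φ) 2 := by
    apply memℓp_gen
    have e : (fun i => ‖rpowSeq f β (⇑φ) i‖ ^ ((2:ℝ≥0∞)).toReal) = fun i => q i ^ 2 :=
      funext fun i => by rw [rpow_toReal_two, hqnorm]
    rw [e]; exact hsq
  have hψn : ‖(⟨rpowSeq f β ⇑φ, hb⟩ : l2)‖ ^ (2:ℕ) = P := by
    have e1 := lp.norm_rpow_eq_tsum (p := 2) (by norm_num) (⟨rpowSeq f β ⇑φ, hb⟩ : l2)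
    rw [rpow_toReal_two] at e1
    rw [e1, hPdef]
    exact tsum_congr fun i => by rw [rpow_toReal_two, hqnorm]
  have hTn : ∀ n, (⇑Tφ : ℕ → ℂ) n = Eseq f S (⇑φ) n := Tphi_apply f S φ Tφ hS hgraph
  set L : ℕ → ℝ := fun n =>
    f n * ∑ k ∈ Finset.Icc 1 n, ‖(⇑φ : ℕ → ℂ) (n - k)‖ / (f n ^ 2 - f (n - k) ^ 2) with hLdef
  set U : ℕ → ℝ := fun n =>
    f n * ∑ k ∈ Finset.Icc 1 S, ‖(⇑φ : ℕ → ℂ) (n + k)‖ / (f (n + k) ^ 2 - f n ^ 2) with hUdef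
  have stepX : ∀ n, ‖mulSeq f (⇑Tφ) n‖ ≤ L n + U n := by
    intro n
    have e1 : mulSeq f (⇑Tφ) n = ((f n : ℝ) : ℂ) * Eseq f S (⇑φ) n := by
      simp only [mulSeq, hTn n]
    rw [e1, Eseq]
    have hA : ‖∑ k ∈ Finset.Icc 1 n, (⇑φ : ℕ → ℂ) (n - k) / ((f n ^ 2 - f (n - k) ^ 2 : ℝ) : ℂ)‖
        ≤ ∑ k ∈ Finset.Icc 1 n, ‖(⇑φ : ℕ → ℂ) (n - k)‖ / (f n ^ 2 - f (n - k) ^ 2) := by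
      refine (norm_sum_le _ _).trans (le_of_eq (Finset.sum_congr rfl fun k hk => ?_))
      have hk' := Finset.mem_Icc.1 hk
      have hpos : 0 < f n ^ 2 - f (n - k) ^ 2 := sub_pos.2 (fsqlt (by omega))
      rw [norm_div, Complex.norm_real, Real.norm_eq_abs, abs_of_pos hpos]
    have hB : ‖∑ k ∈ Finset.Icc 1 S, (⇑φ : ℕ → ℂ) (n + k) / ((f (n + k) ^ 2 - f n ^ 2 : ℝ) : ℂ)‖
        ≤ ∑ k ∈ Finset.Icc 1 S, ‖(⇑φ : ℕ → ℂ) (n + k)‖ / (f (n + k) ^ 2 - f n ^ 2) := by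
      refine (norm_sum_le _ _).trans (le_of_eq (Finset.sum_congr rfl fun k hk => ?_))
      have hk' := Finset.mem_Icc.1 hk
      have hpos : 0 < f (n + k) ^ 2 - f n ^ 2 := sub_pos.2 (fsqlt (by omega))
      rw [norm_div, Complex.norm_real, Real.norm_eq_abs, abs_of_pos hpos]
    calc ‖((f n : ℝ) : ℂ) * (Complex.I * (_ - _))‖
        = f n * ‖(∑ k ∈ Finset.Icc 1 n, (⇑φ : ℕ → ℂ) (n - k) / ((f n ^ 2 - f (n - k) ^ 2 : ℝ) : ℂ))
            - ∑ k ∈ Finset.Icc 1 S, (⇑φ : ℕ → ℂ) (n + k) / ((f (n + k) ^ 2 - f n ^ 2 : ℝ) : ℂ)‖ := by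
          rw [norm_mul, norm_mul, Complex.norm_I, one_mul, Complex.norm_real,
            Real.norm_eq_abs, abs_of_pos (fpos n)]
      _ ≤ f n * (‖∑ k ∈ Finset.Icc 1 n, (⇑φ : ℕ → ℂ) (n - k) / ((f n ^ 2 - f (n - k) ^ 2 : ℝ) : ℂ)‖
            + ‖∑ k ∈ Finset.Icc 1 S, (⇑φ : ℕ → ℂ) (n + k) / ((f (n + k) ^ 2 - f n ^ 2 : ℝ) : ℂ)‖) :=
          mul_le_mul_of_nonneg_left (norm_sub_le _ _) (fpos n).le
      _ ≤ f n * ((∑ k ∈ Finset.Icc 1 n, ‖(⇑φ : ℕ → ℂ) (n - k)‖ / (f n ^ 2 - f (n - k) ^ 2))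
            + ∑ k ∈ Finset.Icc 1 S, ‖(⇑φ : ℕ → ℂ) (n + k)‖ / (f (n + k) ^ 2 - f n ^ 2)) := by
          refine mul_le_mul_of_nonneg_left (add_le_add hA hB) (fpos n).le
      _ = L n + U n := by rw [hLdef, hUdef, mul_add]
  have stepL : ∀ n, L n ^ 2 ≤ C * ((f n ^ 2 / g n) * P) := by
    intro n
    have hLn : L n = ∑ k ∈ Finset.Icc 1 n,
        (Real.sqrt (g n) / (Real.rpow (f (n - k)) β * (f n ^ 2 - f (n - k) ^ 2)))
          * (f n * q (n - k) / Real.sqrt (g n)) := by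
      rw [hLdef]
      simp only [Finset.mul_sum]
      refine Finset.sum_congr rfl fun k hk => ?_
      have hk' := Finset.mem_Icc.1 hk
      have h1 : (0:ℝ) < f n ^ 2 - f (n - k) ^ 2 := sub_pos.2 (fsqlt (by omega))
      have h2 : Real.rpow (f (n - k)) β ≠ 0 := (rpos _).ne'
      have h3 : Real.sqrt (g n) ≠ 0 := (Real.sqrt_pos.2 (hgpos n)).ne'
      rw [hqdef]
      dsimp only
      rw [div_mul_div_comm, mul_div_assoc',
        div_eq_div_iff h1.ne' (mul_ne_zero (mul_ne_zero h2 h1.ne') h3)]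
      ring
    rw [hLn]
    calc (∑ k ∈ Finset.Icc 1 n,
            (Real.sqrt (g n) / (Real.rpow (f (n - k)) β * (f n ^ 2 - f (n - k) ^ 2)))
              * (f n * q (n - k) / Real.sqrt (g n))) ^ 2
        ≤ (∑ k ∈ Finset.Icc 1 n,
            (Real.sqrt (g n) / (Real.rpow (f (n - k)) β * (f n ^ 2 - f (n - k) ^ 2))) ^ 2)
          * ∑ k ∈ Finset.Icc 1 n, (f n * q (n - k) / Real.sqrt (g n)) ^ 2 :=
          Finset.sum_mul_sq_le_sq_mul_sq _ _ _
      _ ≤ C * ((f n ^ 2 / g n) * P) := by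
          have e1 : ∑ k ∈ Finset.Icc 1 n,
              (Real.sqrt (g n) / (Real.rpow (f (n - k)) β * (f n ^ 2 - f (n - k) ^ 2))) ^ 2
              = ∑ k ∈ Finset.Icc 1 n,
                g n / (Real.rpow (f (n - k)) β * (f n ^ 2 - f (n - k) ^ 2)) ^ 2 := by
            refine Finset.sum_congr rfl fun k _ => ?_
            rw [div_pow, Real.sq_sqrt (hgpos n).le]
          have e2 : ∑ k ∈ Finset.Icc 1 n, (f n * q (n - k) / Real.sqrt (g n)) ^ 2
              = (f n ^ 2 / g n) * ∑ k ∈ Finset.Icc 1 n, q (n - k) ^ 2 := by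
            rw [Finset.mul_sum]
            refine Finset.sum_congr rfl fun k _ => ?_
            rw [div_pow, mul_pow, Real.sq_sqrt (hgpos n).le]
            field_simp
          have e3 : ∑ k ∈ Finset.Icc 1 n, q (n - k) ^ 2 = ∑ j ∈ Finset.range n, q j ^ 2 := by
            refine Finset.sum_nbij' (fun k => n - k) (fun j => n - j) ?_ ?_ ?_ ?_ ?_
            · intro a ha; simp only [Finset.mem_Icc] at ha; simp only [Finset.mem_range]; omega
            · intro a ha; simp only [Finset.mem_range] at ha; simp only [Finset.mem_Icc]; omega
            · intro a ha; simp only [Finset.mem_Icc] at ha; omega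
            · intro a ha; simp only [Finset.mem_range] at ha; omega
            · intro a _; rfl
          rw [e1, e2, e3]
          have hs1 : ∑ k ∈ Finset.Icc 1 n,
              g n / (Real.rpow (f (n - k)) β * (f n ^ 2 - f (n - k) ^ 2)) ^ 2 ≤ C := (hMs n).le
          have hs2 : ∑ j ∈ Finset.range n, q j ^ 2 ≤ P := hPle _
          have hnn1 : (0:ℝ) ≤ ∑ k ∈ Finset.Icc 1 n,
              g n / (Real.rpow (f (n - k)) β * (f n ^ 2 - f (n - k) ^ 2)) ^ 2 :=
            Finset.sum_nonneg fun k _ => div_nonneg (hgpos n).le (sq_nonneg _)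
          have hnn2 : (0:ℝ) ≤ f n ^ 2 / g n := div_nonneg (sq_nonneg _) (hgpos n).le
          have hnn3 : (0:ℝ) ≤ ∑ j ∈ Finset.range n, q j ^ 2 :=
            Finset.sum_nonneg fun j _ => sq_nonneg _
          exact mul_le_mul hs1 (mul_le_mul_of_nonneg_left hs2 hnn2)
            (mul_nonneg hnn2 hnn3) hC.le
  have stepU : ∀ n, U n ^ 2 ≤ H * ∑ k ∈ Finset.Icc 1 S,
      |h k| * ((f n ^ 2 / g n) * q (n + k) ^ 2) := by
    intro n
    have hUn : U n = ∑ k ∈ Finset.Icc 1 S, Real.sqrt (|h k|)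
        * (f n * ‖(⇑φ : ℕ → ℂ) (n + k)‖ / ((f (n + k) ^ 2 - f n ^ 2) * Real.sqrt (|h k|))) := by
      rw [hUdef]
      simp only [Finset.mul_sum]
      refine Finset.sum_congr rfl fun k hk => ?_
      have hk1 : 1 ≤ k := (Finset.mem_Icc.1 hk).1
      have h1 : (0:ℝ) < f (n + k) ^ 2 - f n ^ 2 := sub_pos.2 (fsqlt (by omega))
      have h3 : Real.sqrt (|h k|) ≠ 0 := (Real.sqrt_pos.2 (habs k hk1)).ne'
      field_simp
    rw [hUn]
    calc (∑ k ∈ Finset.Icc 1 S, Real.sqrt (|h k|)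
            * (f n * ‖(⇑φ : ℕ → ℂ) (n + k)‖ / ((f (n + k) ^ 2 - f n ^ 2) * Real.sqrt (|h k|)))) ^ 2
        ≤ (∑ k ∈ Finset.Icc 1 S, Real.sqrt (|h k|) ^ 2)
          * ∑ k ∈ Finset.Icc 1 S,
            (f n * ‖(⇑φ : ℕ → ℂ) (n + k)‖ / ((f (n + k) ^ 2 - f n ^ 2) * Real.sqrt (|h k|))) ^ 2 :=
          Finset.sum_mul_sq_le_sq_mul_sq _ _ _
      _ ≤ H * ∑ k ∈ Finset.Icc 1 S, |h k| * ((f n ^ 2 / g n) * q (n + k) ^ 2) := by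
          have e1 : ∑ k ∈ Finset.Icc 1 S, Real.sqrt (|h k|) ^ 2 = ∑ k ∈ Finset.Icc 1 S, |h k| :=
            Finset.sum_congr rfl fun k _ => Real.sq_sqrt (abs_nonneg _)
          have hterm : ∀ k ∈ Finset.Icc 1 S,
              (f n * ‖(⇑φ : ℕ → ℂ) (n + k)‖ / ((f (n + k) ^ 2 - f n ^ 2) * Real.sqrt (|h k|))) ^ 2
              ≤ |h k| * ((f n ^ 2 / g n) * q (n + k) ^ 2) := by
            intro k hk
            have hk1 : 1 ≤ k := (Finset.mem_Icc.1 hk).1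
            have hΔ : (0:ℝ) < f (n + k) ^ 2 - f n ^ 2 := sub_pos.2 (fsqlt (by omega))
            have hhk : 0 < |h k| := habs k hk1
            have eφ : ‖(⇑φ : ℕ → ℂ) (n + k)‖ = q (n + k) / Real.rpow (f (n + k)) β := by
              rw [hqdef]; exact (mul_div_cancel_left₀ _ (rpos _).ne').symm
            have elhs : (f n * ‖(⇑φ : ℕ → ℂ) (n + k)‖
                / ((f (n + k) ^ 2 - f n ^ 2) * Real.sqrt (|h k|))) ^ 2
                = f n ^ 2 * q (n + k) ^ 2
                  / ((Real.rpow (f (n + k)) β * (f (n + k) ^ 2 - f n ^ 2)) ^ 2 * |h k|) := by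
              rw [eφ, div_pow, mul_pow, mul_pow, div_pow, Real.sq_sqrt (abs_nonneg _), mul_pow,
                ← mul_div_assoc, div_div]
              congr 1
              ring
            rw [elhs]
            have hA : (0:ℝ) < (Real.rpow (f n) β * (f (n + k) ^ 2 - f n ^ 2)) ^ 2 := by
              have : (0:ℝ) < Real.rpow (f n) β * (f (n + k) ^ 2 - f n ^ 2) :=
                mul_pos (rpos n) hΔ
              positivity
            have hgle' : g n ≤ h k ^ 2 * (Real.rpow (f n) β * (f (n + k) ^ 2 - f n ^ 2)) ^ 2 :=
              (div_le_iff₀ hA).1 (hwit n k hk1)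
            have hAB : (Real.rpow (f n) β * (f (n + k) ^ 2 - f n ^ 2)) ^ 2
                ≤ (Real.rpow (f (n + k)) β * (f (n + k) ^ 2 - f n ^ 2)) ^ 2 := by
              refine pow_le_pow_left₀ (mul_nonneg (rpos n).le hΔ.le) ?_ 2
              exact mul_le_mul_of_nonneg_right (rmono (Nat.le_add_right n k)) hΔ.le
            have hgB : g n ≤ |h k| * ((Real.rpow (f (n + k)) β * (f (n + k) ^ 2 - f n ^ 2)) ^ 2
                * |h k|) := by
              have habs2 : h k ^ 2 = |h k| * |h k| := by rw [abs_mul_abs_self]; ring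
              nlinarith [hgle', hAB, sq_nonneg (h k)]
            have hD : (0:ℝ) < (Real.rpow (f (n + k)) β * (f (n + k) ^ 2 - f n ^ 2)) ^ 2 * |h k| := by
              have : (0:ℝ) < Real.rpow (f (n + k)) β * (f (n + k) ^ 2 - f n ^ 2) :=
                mul_pos (rpos _) hΔ
              positivity
            have hcle : g n / |h k| ≤ (Real.rpow (f (n + k)) β * (f (n + k) ^ 2 - f n ^ 2)) ^ 2
                * |h k| := (div_le_iff₀ hhk).2 (by nlinarith [hgB])
            calc f n ^ 2 * q (n + k) ^ 2
                  / ((Real.rpow (f (n + k)) β * (f (n + k) ^ 2 - f n ^ 2)) ^ 2 * |h k|)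
                ≤ f n ^ 2 * q (n + k) ^ 2 / (g n / |h k|) :=
                  div_le_div_of_nonneg_left (by positivity) (div_pos (hgpos n) hhk) hcle
              _ = |h k| * ((f n ^ 2 / g n) * q (n + k) ^ 2) := by
                  field_simp
          refine mul_le_mul ?_ (Finset.sum_le_sum hterm) ?_ hH0
          · rw [e1]; exact hsumIcc S
          · exact Finset.sum_nonneg fun k _ => sq_nonneg _
  have key : ∀ N : ℕ, ∑ n ∈ Finset.range N, ‖mulSeq f (⇑Tφ) n‖ ^ 2 ≤ K * P := by
    intro N
    have h1 : ∀ n, ‖mulSeq f (⇑Tφ) n‖ ^ 2 ≤ 2 * L n ^ 2 + 2 * U n ^ 2 := by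
      intro n
      have hx := stepX n
      have hnn := norm_nonneg (mulSeq f (⇑Tφ) n)
      nlinarith [sq_nonneg (L n - U n), sq_nonneg (L n + U n)]
    have hLsum : ∑ n ∈ Finset.range N, L n ^ 2 ≤ C * (G * P) := by
      calc ∑ n ∈ Finset.range N, L n ^ 2
          ≤ ∑ n ∈ Finset.range N, C * ((f n ^ 2 / g n) * P) :=
            Finset.sum_le_sum fun n _ => stepL n
        _ = C * ((∑ n ∈ Finset.range N, f n ^ 2 / g n) * P) := by
            rw [Finset.sum_mul, Finset.mul_sum]
        _ ≤ C * (G * P) := by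
            refine mul_le_mul_of_nonneg_left (mul_le_mul_of_nonneg_right ?_ hP0) hC.le
            exact Summable.sum_le_tsum _ (fun n _ => div_nonneg (sq_nonneg _) (hgpos n).le) hfg
    have hUsum : ∑ n ∈ Finset.range N, U n ^ 2 ≤ H ^ 2 * (G * P) := by
      calc ∑ n ∈ Finset.range N, U n ^ 2
          ≤ ∑ n ∈ Finset.range N, H * ∑ k ∈ Finset.Icc 1 S,
              |h k| * ((f n ^ 2 / g n) * q (n + k) ^ 2) :=
            Finset.sum_le_sum fun n _ => stepU n
        _ = H * ∑ k ∈ Finset.Icc 1 S, ∑ n ∈ Finset.range N,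
              |h k| * ((f n ^ 2 / g n) * q (n + k) ^ 2) := by
            rw [← Finset.mul_sum, Finset.sum_comm]
        _ ≤ H * ∑ k ∈ Finset.Icc 1 S, |h k| * (G * P) := by
            refine mul_le_mul_of_nonneg_left (Finset.sum_le_sum fun k hk => ?_) hH0
            rw [← Finset.mul_sum]
            refine mul_le_mul_of_nonneg_left ?_ (abs_nonneg _)
            calc ∑ n ∈ Finset.range N, (f n ^ 2 / g n) * q (n + k) ^ 2
                ≤ ∑ n ∈ Finset.range N, G * q (n + k) ^ 2 :=
                  Finset.sum_le_sum fun n _ =>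
                    mul_le_mul_of_nonneg_right (hGle n) (sq_nonneg _)
              _ = G * ∑ n ∈ Finset.range N, q (n + k) ^ 2 := by rw [Finset.mul_sum]
              _ ≤ G * P := mul_le_mul_of_nonneg_left
                  (sum_shift_le (fun m => q m ^ 2) (fun m => sq_nonneg _) hsq k N) hGpos.le
        _ = H * ((∑ k ∈ Finset.Icc 1 S, |h k|) * (G * P)) := by rw [Finset.sum_mul]
        _ ≤ H * (H * (G * P)) :=
            mul_le_mul_of_nonneg_left
              (mul_le_mul_of_nonneg_right (hsumIcc S) (mul_nonneg hGpos.le hP0)) hH0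
        _ = H ^ 2 * (G * P) := by ring
    calc ∑ n ∈ Finset.range N, ‖mulSeq f (⇑Tφ) n‖ ^ 2
        ≤ ∑ n ∈ Finset.range N, (2 * L n ^ 2 + 2 * U n ^ 2) :=
          Finset.sum_le_sum fun n _ => h1 n
      _ = 2 * ∑ n ∈ Finset.range N, L n ^ 2 + 2 * ∑ n ∈ Finset.range N, U n ^ 2 := by
          rw [Finset.sum_add_distrib, Finset.mul_sum, Finset.mul_sum]
      _ ≤ 2 * (C * (G * P)) + 2 * (H ^ 2 * (G * P)) := by
          have hLnn : (0:ℝ) ≤ 2 := by norm_num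
          gcongr
      _ = K * P := by rw [hKdef]; ring
  have keyF : ∀ F : Finset ℕ, ∑ n ∈ F, ‖mulSeq f (⇑Tφ) n‖ ^ 2 ≤ K * P := by
    intro F
    obtain ⟨N, hN⟩ := Finset.exists_nat_subset_range F
    calc ∑ n ∈ F, ‖mulSeq f (⇑Tφ) n‖ ^ 2
        ≤ ∑ n ∈ Finset.range N, ‖mulSeq f (⇑Tφ) n‖ ^ 2 :=
          Finset.sum_le_sum_of_subset_of_nonneg hN fun n _ _ => sq_nonneg _
      _ ≤ K * P := key N
  have hm : Memℓp (mulSeq f ⇑Tφ) 2 := by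
    refine memℓp_gen' (C := K * P) (fun s => ?_)
    calc ∑ i ∈ s, ‖mulSeq f (⇑Tφ) i‖ ^ ((2:ℝ≥0∞)).toReal
        = ∑ i ∈ s, ‖mulSeq f (⇑Tφ) i‖ ^ (2:ℕ) :=
          Finset.sum_congr rfl fun i _ => rpow_toReal_two _
      _ ≤ K * P := keyF s
  refine ⟨hm, hb, ?_⟩
  have hXn2 : ‖(⟨mulSeq f ⇑Tφ, hm⟩ : l2)‖ ^ (2:ℕ) = ∑' n, ‖mulSeq f (⇑Tφ) n‖ ^ 2 := by
    have e1 := lp.norm_rpow_eq_tsum (p := 2) (by norm_num) (⟨mulSeq f ⇑Tφ, hm⟩ : l2)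
    rw [rpow_toReal_two] at e1
    rw [e1]
    exact tsum_congr fun i => rpow_toReal_two _
  have hsumX : Summable (fun n => ‖mulSeq f (⇑Tφ) n‖ ^ (2:ℕ)) := by
    have := hm.summable (p := 2) (by norm_num)
    refine this.congr fun i => rpow_toReal_two _
  have htsum : ∑' n, ‖mulSeq f (⇑Tφ) n‖ ^ 2 ≤ K * P := Summable.tsum_le_of_sum_le hsumX keyF
  have hfinal : ‖(⟨mulSeq f ⇑Tφ, hm⟩ : l2)‖ ^ (2:ℕ)
      ≤ (Real.sqrt (K + 1) * ‖(⟨rpowSeq f β ⇑φ, hb⟩ : l2)‖) ^ (2:ℕ) := by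
    rw [mul_pow, Real.sq_sqrt (by positivity : (0:ℝ) ≤ K + 1), hψn, hXn2]
    nlinarith [htsum, hP0]
  calc ‖(⟨mulSeq f ⇑Tφ, hm⟩ : l2)‖
      = Real.sqrt (‖(⟨mulSeq f ⇑Tφ, hm⟩ : l2)‖ ^ (2:ℕ)) := (Real.sqrt_sq (norm_nonneg _)).symm
    _ ≤ Real.sqrt ((Real.sqrt (K + 1) * ‖(⟨rpowSeq f β ⇑φ, hb⟩ : l2)‖) ^ (2:ℕ)) :=
        Real.sqrt_le_sqrt hfinal
    _ = Real.sqrt (K + 1) * ‖(⟨rpowSeq f β ⇑φ, hb⟩ : l2)‖ :=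
        Real.sqrt_sq (by positivity)
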